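/- Let α, β, γ, ε be real numbers satisfying the Fuchsian condition 1 + α + β = γ + 2ε, and suppose γ < 3 and γ is not such that (3−γ)/2 is a nonpositive integer. Define w(z) = z^(1−γ) · Σ_{k=0}^∞ [ (ε − α/2)_k (ε − β/2)_k / ( ((3−γ)/2)_k k! ) ] z^(2k), where (x)_k is the ascending Pochhammer symbol (the series converges for |z| < 1). Then for every z ∈ (0,1), w satisfies the general Heun equation with a = −1, q = 0, δ = ε: w''(z) + ( γ/z + ε/(z−1) + ε/(z+1) ) w'(z) + αβ z/( z(z−1)(z+1) ) w(z) = 0. -/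

import Mathlib

open Filter Topology

noncomputable def heunC (a b c : ℝ) (k : ℕ) : ℝ :=
  ((ascPochhammer ℝ k).eval a * (ascPochhammer ℝ k).eval b)
    / ((ascPochhammer ℝ k).eval c * (k.factorial : ℝ))

lemma poch_succ_eval (x : ℝ) (k : ℕ) :
    (ascPochhammer ℝ (k+1)).eval x = (ascPochhammer ℝ k).eval x * (x + k) := by
  simp [ascPochhammer_succ_right]

lemma poch_ne_zero {c : ℝ} (hc : ∀ m : ℕ, c ≠ -(m : ℝ)) (k : ℕ) :
    (ascPochhammer ℝ k).eval c ≠ 0 := by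
  induction k with
  | zero => simp
  | succ k ih =>
    rw [poch_succ_eval]
    refine mul_ne_zero ih fun h => hc k (by linarith)

lemma heunC_rec (a b : ℝ) {c : ℝ} (hc : ∀ m : ℕ, c ≠ -(m : ℝ)) (k : ℕ) :
    heunC a b c (k+1) * (((k:ℝ)+1) * (c+k)) = heunC a b c k * ((a+k)*(b+k)) := by
  have h1 := poch_ne_zero hc k
  have hck : c + (k:ℝ) ≠ 0 := fun h => hc k (by linarith)
  have h2 : ((k.factorial : ℝ)) ≠ 0 := Nat.cast_ne_zero.2 k.factorial_ne_zero
  have h3 : ((k:ℝ)+1) ≠ 0 := by positivity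
  unfold heunC
  rw [poch_succ_eval, poch_succ_eval, poch_succ_eval, Nat.factorial_succ]
  push_cast
  field_simp

lemma tendsto_shift (x y : ℝ) :
    Tendsto (fun k : ℕ => (x + k)/(y + k)) atTop (𝓝 1) := by
  have hy : Tendsto (fun k : ℕ => y + (k:ℝ)) atTop atTop :=
    tendsto_atTop_add_const_left _ y tendsto_natCast_atTop_atTop
  have h0 : Tendsto (fun k : ℕ => (x - y)/(y + (k:ℝ))) atTop (𝓝 0) :=
    Tendsto.const_div_atTop hy _
  have h1 : Tendsto (fun k : ℕ => 1 + (x-y)/(y+(k:ℝ))) atTop (𝓝 1) := by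
    simpa using tendsto_const_nhds.add h0
  apply h1.congr'
  filter_upwards [hy.eventually_gt_atTop 0] with k hk
  field_simp
  ring

lemma heunC_abs_rec (a b : ℝ) {c : ℝ} (hc : ∀ m : ℕ, c ≠ -(m : ℝ)) (k : ℕ) :
    |heunC a b c (k+1)| * (((k:ℝ)+1) * |c+k|) = |heunC a b c k| * (|a+k| * |b+k|) := by
  have h := congrArg abs (heunC_rec a b hc k)
  rw [abs_mul, abs_mul, abs_mul, abs_mul] at h
  rwa [abs_of_pos (by positivity : (0:ℝ) < (k:ℝ)+1)] at h

lemma heunC_summable (a b : ℝ) {c : ℝ} (hc : ∀ m : ℕ, c ≠ -(m : ℝ)) {ρ : ℝ}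
    (h0 : 0 < ρ) (h1 : ρ < 1) :
    Summable (fun k : ℕ => |heunC a b c k| * ((k:ℝ)+2)^2 * ρ^k) := by
  set R : ℕ → ℝ := fun k => ρ * |(a+k)/(1+(k:ℝ))| * |(b+k)/(c+k)| * (((3:ℝ)+k)/(2+k))^2 with hRdef
  have hR : Tendsto R atTop (𝓝 ρ) := by
    have t1 := (tendsto_shift a 1).abs
    have t2 := (tendsto_shift b c).abs
    have t3 := (tendsto_shift 3 2).abs
    have := (((tendsto_const_nhds (x := ρ)).mul t1).mul t2).mul (t3.pow 2)
    simpa using this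
  have hev : ∀ᶠ k in atTop, R k < (1+ρ)/2 := hR.eventually_lt_const (by linarith)
  apply summable_of_ratio_norm_eventually_le (show (1+ρ)/2 < 1 by linarith)
  filter_upwards [hev] with k hk
  have hck : c + (k:ℝ) ≠ 0 := fun h => hc k (by linarith)
  have hck' : |c + (k:ℝ)| ≠ 0 := abs_ne_zero.2 hck
  have hk1 : ((k:ℝ)+1) ≠ 0 := by positivity
  have hC1 : |heunC a b c (k+1)| = |heunC a b c k| * (|a+k| * |b+k|) / (((k:ℝ)+1) * |c+k|) := by
    rw [eq_div_iff (mul_ne_zero hk1 hck')]; exact heunC_abs_rec a b hc k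
  have key : |heunC a b c (k+1)| * (((k:ℝ)+1)+2)^2 * ρ^(k+1)
      = R k * (|heunC a b c k| * ((k:ℝ)+2)^2 * ρ^k) := by
    rw [hC1, hRdef]
    simp only [abs_div]
    rw [abs_of_pos (by positivity : (0:ℝ) < 1+(k:ℝ))]
    have h2k : ((2:ℝ)+(k:ℝ)) ≠ 0 := by positivity
    field_simp
    ring
  rw [Real.norm_of_nonneg (by positivity), Real.norm_of_nonneg (by positivity)]
  push_cast
  rw [key]
  exact mul_le_mul_of_nonneg_right hk.le (by positivity)

set_option maxHeartbeats 2000000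

/-- Let `α, β, γ, ε` be real satisfying the Fuchsian condition `1 + α + β = γ + 2ε`, with
`γ < 3` and `(3−γ)/2` not a nonpositive integer.  Define
`w(z) = z^(1−γ) Σ_k (ε−α/2)_k (ε−β/2)_k / (((3−γ)/2)_k k!) z^(2k)` (the second fundamental
solution `z^(1−γ) ₂F₁(ε−α/2, ε−β/2; (3−γ)/2; z²)` at the exponent `1−γ` of `z = 0`).
Then for every `z ∈ (0,1)`, `w` satisfies the general Heun equation with `a = −1`, `q = 0`,
`δ = ε`: `w'' + (γ/z + ε/(z−1) + ε/(z+1)) w' + αβ z/(z(z−1)(z+1)) w = 0`. -/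
theorem heun_q_zero_second_solution (α β γ ε : ℝ) (hfuchs : 1 + α + β = γ + 2 * ε)
    (hγ : γ < 3) (hγ' : ∀ m : ℕ, (3 - γ) / 2 ≠ -(m : ℝ))
    (w : ℝ → ℝ)
    (hw : ∀ z : ℝ, w z = z ^ (1 - γ) * ∑' k : ℕ,
        ((ascPochhammer ℝ k).eval (ε - α / 2) * (ascPochhammer ℝ k).eval (ε - β / 2))
          / ((ascPochhammer ℝ k).eval ((3 - γ) / 2) * (k.factorial : ℝ)) * z ^ (2 * k)) :
    ∀ z ∈ Set.Ioo (0:ℝ) 1,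
      DifferentiableAt ℝ w z ∧ DifferentiableAt ℝ (deriv w) z ∧
      deriv (deriv w) z + (γ / z + ε / (z - 1) + ε / (z + 1)) * deriv w z
        + α * β * z / (z * (z - 1) * (z + 1)) * w z = 0 := by
  intro z hz
  obtain ⟨hz0, hz1⟩ := hz
  set a : ℝ := ε - α / 2 with hadef
  set b : ℝ := ε - β / 2 with hbdef
  set c : ℝ := (3 - γ) / 2 with hcdef
  set ρ : ℝ := (1 + z) / 2 with hρdef
  have hρ0 : 0 < ρ := by rw [hρdef]; linarith
  have hρ1 : ρ < 1 := by rw [hρdef]; linarith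
  have hzρ : z < ρ := by rw [hρdef]; linarith
  set t : Set ℝ := Set.Ioo (-ρ) ρ with htdef
  have hzt : z ∈ t := ⟨by linarith, hzρ⟩
  set C : ℕ → ℝ := heunC a b c with hCdef
  -- master summable
  have hM : Summable (fun k : ℕ => |C k| * ((k:ℝ)+2)^2 * (ρ^2)^k) :=
    heunC_summable a b hγ' (by positivity) (by nlinarith)
  set u : ℕ → ℝ := fun k => (4/ρ^2) * (|C k| * ((k:ℝ)+2)^2 * (ρ^2)^k) with hudef
  have hu : Summable u := hM.mul_left _
  have hpow : ∀ n m : ℕ, n ≤ m → m ≤ n + 2 → ρ ^ n ≤ ρ ^ m / ρ^2 := by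
    intro n m h1 h2
    rw [le_div_iff₀ (by positivity)]
    calc ρ^n * ρ^2 = ρ^(n+2) := (pow_add _ _ _).symm
      _ ≤ ρ^m := pow_le_pow_of_le_one hρ0.le hρ1.le h2
  have hueq : ∀ k : ℕ, u k = 4 * (|C k| * ((k:ℝ)+2)^2) * (ρ^(2*k)/ρ^2) := by
    intro k
    rw [hudef]
    rw [pow_mul]
    field_simp
  -- bounds
  have hb0 : ∀ (k : ℕ), ∀ y ∈ t, ‖C k * y^(2*k)‖ ≤ u k := by
    intro k y hy
    have hyρ : |y| ≤ ρ := le_of_lt (abs_lt.2 ⟨hy.1, hy.2⟩)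
    rw [Real.norm_eq_abs, abs_mul, abs_pow, hueq]
    calc |C k| * |y|^(2*k) ≤ |C k| * ρ^(2*k) := by
          gcongr
      _ ≤ 4 * (|C k| * ((k:ℝ)+2)^2) * (ρ^(2*k)/ρ^2) := by
          have h1 : ρ^(2*k) ≤ ρ^(2*k)/ρ^2 := hpow _ _ le_rfl (by omega)
          have h2 : |C k| * ρ^(2*k) ≤ (4 * (|C k| * ((k:ℝ)+2)^2)) * ρ^(2*k) := by
            have h4 : (1:ℝ) ≤ 4*((k:ℝ)+2)^2 := by nlinarith [Nat.cast_nonneg (α := ℝ) k]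
            have : |C k| ≤ 4 * (|C k| * ((k:ℝ)+2)^2) := by
              nlinarith [mul_le_mul_of_nonneg_left h4 (abs_nonneg (C k))]
            exact mul_le_mul_of_nonneg_right this (by positivity)
          calc |C k| * ρ^(2*k) ≤ (4 * (|C k| * ((k:ℝ)+2)^2)) * ρ^(2*k) := h2
            _ ≤ 4 * (|C k| * ((k:ℝ)+2)^2) * (ρ^(2*k)/ρ^2) :=
                mul_le_mul_of_nonneg_left h1 (by positivity)
  have hb1 : ∀ (k : ℕ), ∀ y ∈ t, ‖C k * (((2*k:ℕ):ℝ) * y^(2*k-1))‖ ≤ u k := by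
    intro k y hy
    have hyρ : |y| ≤ ρ := le_of_lt (abs_lt.2 ⟨hy.1, hy.2⟩)
    rw [Real.norm_eq_abs, abs_mul, abs_mul, abs_pow, hueq]
    have hcast : |((2*k:ℕ):ℝ)| = 2*(k:ℝ) := by
      rw [abs_of_nonneg (by positivity)]; push_cast; ring
    rw [hcast]
    calc |C k| * (2*(k:ℝ) * |y|^(2*k-1)) ≤ |C k| * (2*(k:ℝ) * ρ^(2*k-1)) := by
          gcongr
      _ ≤ 4 * (|C k| * ((k:ℝ)+2)^2) * (ρ^(2*k)/ρ^2) := by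
          have h1 : ρ^(2*k-1) ≤ ρ^(2*k)/ρ^2 := hpow _ _ (by omega) (by omega)
          have h2 : 2*(k:ℝ) ≤ 4 * ((k:ℝ)+2)^2 := by nlinarith [sq_nonneg ((k:ℝ)+2), Nat.cast_nonneg (α := ℝ) k]
          calc |C k| * (2*(k:ℝ) * ρ^(2*k-1)) ≤ |C k| * (4 * ((k:ℝ)+2)^2 * (ρ^(2*k)/ρ^2)) := by
                gcongr
          _ = 4 * (|C k| * ((k:ℝ)+2)^2) * (ρ^(2*k)/ρ^2) := by ring
  have hb2 : ∀ (k : ℕ), ∀ y ∈ t,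
      ‖C k * (((2*k:ℕ):ℝ) * (((2*k-1:ℕ):ℝ) * y^(2*k-1-1)))‖ ≤ u k := by
    intro k y hy
    have hyρ : |y| ≤ ρ := le_of_lt (abs_lt.2 ⟨hy.1, hy.2⟩)
    rw [Real.norm_eq_abs, abs_mul, abs_mul, abs_mul, abs_pow, hueq]
    have hc1 : |((2*k:ℕ):ℝ)| = 2*(k:ℝ) := by
      rw [abs_of_nonneg (by positivity)]; push_cast; ring
    have hc2 : |((2*k-1:ℕ):ℝ)| ≤ 2*(k:ℝ)+1 := by
      rw [abs_of_nonneg (by positivity)]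
      have : (2*k-1:ℕ) ≤ 2*k+1 := by omega
      calc ((2*k-1:ℕ):ℝ) ≤ ((2*k+1:ℕ):ℝ) := by exact_mod_cast this
        _ = 2*(k:ℝ)+1 := by push_cast; ring
    rw [hc1]
    have h1 : ρ^(2*k-1-1) ≤ ρ^(2*k)/ρ^2 := hpow _ _ (by omega) (by omega)
    calc |C k| * (2*(k:ℝ) * (|((2*k-1:ℕ):ℝ)| * |y|^(2*k-1-1)))
        ≤ |C k| * (2*(k:ℝ) * ((2*(k:ℝ)+1) * ρ^(2*k-1-1))) := by
          gcongr
      _ ≤ 4 * (|C k| * ((k:ℝ)+2)^2) * (ρ^(2*k)/ρ^2) := by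
          have h2 : 2*(k:ℝ) * (2*(k:ℝ)+1) ≤ 4 * ((k:ℝ)+2)^2 := by
            nlinarith [Nat.cast_nonneg (α := ℝ) k]
          calc |C k| * (2*(k:ℝ) * ((2*(k:ℝ)+1) * ρ^(2*k-1-1)))
              = |C k| * (2*(k:ℝ) * (2*(k:ℝ)+1)) * ρ^(2*k-1-1) := by ring
            _ ≤ (|C k| * (4 * ((k:ℝ)+2)^2)) * (ρ^(2*k)/ρ^2) := by
                gcongr
            _ = 4 * (|C k| * ((k:ℝ)+2)^2) * (ρ^(2*k)/ρ^2) := by ring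
  -- the three series
  set F : ℝ → ℝ := fun x => ∑' k : ℕ, C k * x^(2*k) with hFdef
  set F1 : ℝ → ℝ := fun x => ∑' k : ℕ, C k * (((2*k:ℕ):ℝ) * x^(2*k-1)) with hF1def
  set F2 : ℝ → ℝ := fun x => ∑' k : ℕ,
      C k * (((2*k:ℕ):ℝ) * (((2*k-1:ℕ):ℝ) * x^(2*k-1-1))) with hF2def
  have hopen : IsOpen t := isOpen_Ioo
  have hconn : IsPreconnected t := (convex_Ioo _ _).isPreconnected
  have hs0 : Summable (fun k : ℕ => C k * z^(2*k)) :=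
    Summable.of_norm_bounded hu (fun k => hb0 k z hzt)
  have hs1' : Summable (fun k : ℕ => C k * (((2*k:ℕ):ℝ) * z^(2*k-1))) :=
    Summable.of_norm_bounded hu (fun k => hb1 k z hzt)
  have hDF : ∀ x ∈ t, HasDerivAt F (F1 x) x := by
    intro x hx
    exact hasDerivAt_tsum_of_isPreconnected hu hopen hconn
      (fun n y _ => (hasDerivAt_pow (2*n) y).const_mul (C n))
      (fun n y hy => hb1 n y hy) hzt hs0 hx
  have hDF1 : ∀ x ∈ t, HasDerivAt F1 (F2 x) x := by
    intro x hx
    exact hasDerivAt_tsum_of_isPreconnected hu hopen hconn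
      (fun n y _ => ((hasDerivAt_pow (2*n-1) y).const_mul ((2*n:ℕ):ℝ)).const_mul (C n))
      (fun n y hy => hb2 n y hy) hzt hs1' hx
  have hw' : w = fun x => x ^ (1-γ) * F x := by
    funext x
    rw [hw x]
    simp only [hFdef, hCdef, heunC]
  have hzt' : z ∈ Set.Ioo (0:ℝ) ρ := ⟨hz0, hzρ⟩
  set g : ℝ → ℝ := fun x => (1-γ) * x^(1-γ-1) * F x + x^(1-γ) * F1 x with hgdef
  have hW : ∀ x ∈ Set.Ioo (0:ℝ) ρ, HasDerivAt w (g x) x := by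
    intro x hx
    rw [hw']
    have h1 : HasDerivAt (fun y : ℝ => y^(1-γ)) ((1-γ) * x^(1-γ-1)) x :=
      Real.hasDerivAt_rpow_const (Or.inl (ne_of_gt hx.1))
    exact h1.mul (hDF x ⟨by linarith [hx.1], hx.2⟩)
  have hdw : deriv w =ᶠ[𝓝 z] g := by
    filter_upwards [isOpen_Ioo.mem_nhds hzt'] with x hx
    exact (hW x hx).deriv
  have hdwz : deriv w z = g z := (hW z hzt').deriv
  have hr1 : HasDerivAt (fun x:ℝ => x^(1-γ-1)) ((1-γ-1)*z^(1-γ-1-1)) z :=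
    Real.hasDerivAt_rpow_const (Or.inl (ne_of_gt hz0))
  have hG2 : HasDerivAt g ((1-γ)*((1-γ-1)*z^(1-γ-1-1)) * F z + (1-γ)*z^(1-γ-1) * F1 z
      + ((1-γ)*z^(1-γ-1) * F1 z + z^(1-γ)*F2 z)) z := by
    have ha1 := (hr1.const_mul (1-γ)).mul (hDF z hzt)
    have ha2 := (Real.hasDerivAt_rpow_const (p := 1-γ) (Or.inl (ne_of_gt hz0))).mul (hDF1 z hzt)
    exact ha1.add ha2
  have hddw : deriv (deriv w) z = (1-γ)*((1-γ-1)*z^(1-γ-1-1)) * F z + (1-γ)*z^(1-γ-1) * F1 z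
      + ((1-γ)*z^(1-γ-1) * F1 z + z^(1-γ)*F2 z) := by
    rw [hdw.deriv_eq]; exact hG2.deriv
  refine ⟨(hW z hzt').differentiableAt, (hdw.differentiableAt_iff).2 hG2.differentiableAt, ?_⟩
  set e1 : ℝ := 2 - γ + 2*ε with he1def
  set e0 : ℝ := 2*(1-γ)*ε + α*β with he0def
  set s0 : ℕ → ℝ := fun k => C k * z^(2*k) with hs0def
  set s1 : ℕ → ℝ := fun k => C k * (2*(k:ℝ)) * z^(2*k) with hs1def
  set s2 : ℕ → ℝ := fun k => C k * (2*(k:ℝ)) * (2*(k:ℝ)-1) * z^(2*k) with hs2def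
  set sb : ℕ → ℝ := fun k => C k * (2*(k:ℝ)) * (2*(k:ℝ)+1-γ) * z^(2*k) with hsbdef
  set sA : ℕ → ℝ := fun k => C k * (4*(a+(k:ℝ))*(b+(k:ℝ))) * z^(2*k) with hsAdef
  have hzabs : |z| ≤ ρ := by rw [abs_of_pos hz0]; exact hzρ.le
  have hzpow : ∀ k:ℕ, |z|^(2*k) ≤ ρ^(2*k)/ρ^2 := fun k =>
    le_trans (pow_le_pow_left₀ (abs_nonneg z) hzabs _) (hpow _ _ le_rfl (by omega))
  have hq : ∀ (d : ℕ → ℝ), (∀ k, |d k| ≤ 4*((k:ℝ)+2)^2) →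
      Summable (fun k => C k * d k * z^(2*k)) := by
    intro d hd
    apply Summable.of_norm_bounded hu
    intro k
    rw [Real.norm_eq_abs, abs_mul, abs_mul, abs_pow, hueq]
    calc |C k| * |d k| * |z|^(2*k)
        ≤ (|C k| * (4*((k:ℝ)+2)^2)) * (ρ^(2*k)/ρ^2) :=
          mul_le_mul (mul_le_mul_of_nonneg_left (hd k) (abs_nonneg (C k))) (hzpow k)
            (by positivity) (by positivity)
      _ = 4 * (|C k| * ((k:ℝ)+2)^2) * (ρ^(2*k)/ρ^2) := by ring
  have hS0 : Summable s0 := by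
    apply (hq (fun _ => 1) (fun k => by beta_reduce; rw [abs_one]; nlinarith [Nat.cast_nonneg (α := ℝ) k])).congr
    intro k; simp only [hs0def]; ring
  have hS1 : Summable s1 := by
    apply (hq (fun k => 2*(k:ℝ)) (fun k => by
      beta_reduce
      rw [abs_of_nonneg (by positivity)]; nlinarith [Nat.cast_nonneg (α := ℝ) k])).congr
    intro k; simp only [hs1def]
  have hS2 : Summable s2 := by
    apply (hq (fun k => (2*(k:ℝ))*(2*(k:ℝ)-1)) (fun k => by
      beta_reduce
      have h0 : (0:ℝ) ≤ (k:ℝ) := Nat.cast_nonneg k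
      rw [abs_le]; constructor <;> nlinarith)).congr
    intro k; simp only [hs2def]; ring
  have hSb : Summable sb := by
    apply ((hS2.add (hS1.mul_left (2-γ)))).congr
    intro k; simp only [hs2def, hs1def, hsbdef]; ring
  have hSA : Summable sA := by
    apply ((hS2.add (hS1.mul_left e1)).add (hS0.mul_left e0)).congr
    intro k
    simp only [hs2def, hs1def, hs0def, hsAdef, hadef, hbdef, he1def, he0def]
    linear_combination (2*((k:ℝ)+ε) * C k * z^(2*k)) * hfuchs
  have hterm : ∀ k:ℕ, z^2 * sA k = sb (k+1) := by
    intro k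
    have hrec := heunC_rec a b hγ' k
    rw [hcdef] at hrec
    rw [← hCdef] at hrec
    simp only [hsAdef, hsbdef]
    rw [show 2*(k+1) = 2*k+2 from by omega, pow_add]
    push_cast
    linear_combination (-4 * z^(2*k) * z^2) * hrec
  have hshift : ∑' k, sb k = ∑' k, sb (k+1) := by
    rw [Summable.tsum_eq_zero_add hSb]
    norm_num [hsbdef]
  have hzsA : z^2 * (∑' k, sA k) = ∑' k, sb k := by
    rw [← tsum_mul_left, hshift]
    exact tsum_congr hterm
  have hSAeq : ∑' k, sA k = (∑' k, s2 k) + (e1 * ∑' k, s1 k + e0 * ∑' k, s0 k) := by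
    rw [← tsum_mul_left (a := e1), ← tsum_mul_left (a := e0),
      ← Summable.tsum_add (hS1.mul_left e1) (hS0.mul_left e0),
      ← Summable.tsum_add hS2 ((hS1.mul_left e1).add (hS0.mul_left e0))]
    apply tsum_congr
    intro k
    simp only [hs2def, hs1def, hs0def, hsAdef, hadef, hbdef, he1def, he0def]
    linear_combination (-2*((k:ℝ)+ε) * C k * z^(2*k)) * hfuchs
  have hSbeq : ∑' k, sb k = (∑' k, s2 k) + (2-γ) * ∑' k, s1 k := by
    rw [← tsum_mul_left (a := 2-γ), ← Summable.tsum_add hS2 (hS1.mul_left (2-γ))]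
    apply tsum_congr
    intro k
    simp only [hs2def, hs1def, hsbdef]
    ring
  have hK : z^2 * ((∑' k, s2 k) + (e1 * ∑' k, s1 k + e0 * ∑' k, s0 k))
      = (∑' k, s2 k) + (2-γ) * ∑' k, s1 k := by
    rw [← hSAeq, hzsA, hSbeq]
  have hzne : z ≠ 0 := ne_of_gt hz0
  have hwz : w z = z^(1-γ) * F z := by rw [hw']
  have hgz : g z = (1-γ) * z^(1-γ-1) * F z + z^(1-γ) * F1 z := by rw [hgdef]
  have hFz : F z = ∑' k, s0 k := by
    rw [hFdef]
  have hr1' : z^(1-γ-1) = z^(1-γ)/z := by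
    rw [Real.rpow_sub hz0, Real.rpow_one]
  have hr2' : z^(1-γ-1-1) = z^(1-γ)/z/z := by
    rw [Real.rpow_sub hz0, Real.rpow_one, hr1']
  have hzF1 : z * F1 z = ∑' k, s1 k := by
    rw [hF1def, ← tsum_mul_left]
    apply tsum_congr
    intro k
    simp only [hs1def]
    cases k with
    | zero => simp
    | succ n =>
      rw [show 2*(n+1)-1 = 2*n+1 from by omega, show 2*(n+1) = 2*n+1+1 from by omega,
        pow_succ]
      push_cast
      ring
  have hz2F2 : z^2 * F2 z = ∑' k, s2 k := by
    rw [hF2def, ← tsum_mul_left]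
    apply tsum_congr
    intro k
    simp only [hs2def]
    cases k with
    | zero => simp
    | succ n =>
      rw [show 2*(n+1)-1-1 = 2*n from by omega, show 2*(n+1)-1 = 2*n+1 from by omega,
        show 2*(n+1) = 2*n+2 from by omega, pow_add]
      push_cast
      ring
  have hY1 : F1 z = (∑' k, s1 k)/z := by
    rw [eq_div_iff hzne, mul_comm]; exact hzF1
  have hY2 : F2 z = (∑' k, s2 k)/(z^2) := by
    rw [eq_div_iff (pow_ne_zero 2 hzne), mul_comm]; exact hz2F2
  have hz1' : z - 1 ≠ 0 := by intro h; linarith [sub_eq_zero.1 h]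
  have hz2' : z + 1 ≠ 0 := by positivity
  rw [hddw, hdwz, hgz, hwz, hr1', hr2', hY1, hY2, hFz]
  field_simp
  linear_combination (z^(1-γ)) * hK - (z^(1-γ) * z^2 * ∑' k, s1 k) * he1def - (z^(1-γ) * z^2 * ∑' k, s0 k) * he0def
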